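/- Let f be a λ-eigenfunction of the hypercube F_q^n with λ = (q−1)n − qh, and suppose P_d^{(q)}(h;n) ≠ 0 for some d ≤ h. Then f(0) = (Σ_{α: wt(α)=d} f(α)) / P_d^{(q)}(h;n); in particular, the value of f at the zero vertex is uniquely determined by the values of f on the sphere of radius d about 0. -/

import Mathlib

def kraw (q i t N : ℕ) : ℤ :=
  ∑ j ∈ Finset.range (i+1),
    (-1:ℤ)^j * ((q:ℤ)-1)^(i-j) * (t.choose j : ℤ) * ((N-t).choose (i-j) : ℤ)

open Finset Polynomial

lemma coeff_one_add_CX_pow (c : ℤ) (m i : ℕ) :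
    ((1 + C c * X : ℤ[X])^m).coeff i = c^i * (m.choose i) := by
  rw [add_comm, add_pow, finset_sum_coeff]
  simp only [one_pow, mul_one, mul_pow, ← C_pow, ← C_eq_natCast, coeff_mul_C, coeff_C_mul,
    coeff_X_pow]
  rw [Finset.sum_eq_single i]
  · simp
  · intro k _ hk
    simp [Ne.symm hk]
  · intro hi
    rw [mem_range, not_lt] at hi
    simp [Nat.choose_eq_zero_of_lt hi]

lemma coeff_one_sub_X_pow (h i : ℕ) :
    ((1 - X : ℤ[X])^h).coeff i = (-1)^i * (h.choose i) := by
  have : (1 - X : ℤ[X]) = 1 + C (-1) * X := by ring_nf; rw [C_neg, C_1]; ring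
  rw [this, coeff_one_add_CX_pow]

noncomputable def Gp (c : ℤ) (m h : ℕ) : ℤ[X] := (1 + C c * X)^m * (1 - X)^h

lemma Gp_coeff (q h n i : ℕ) : (Gp ((q:ℤ)-1) (n-h) h).coeff i = kraw q i h n := by
  rw [Gp, coeff_mul, Finset.Nat.sum_antidiagonal_eq_sum_range_succ_mk, kraw,
    ← Finset.sum_range_reflect]
  refine Finset.sum_congr rfl fun k hk => ?_
  rw [mem_range, Nat.lt_succ_iff] at hk
  simp only [Nat.succ_sub_one, Nat.sub_sub_self hk]
  rw [coeff_one_add_CX_pow, coeff_one_sub_X_pow]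
  ring

lemma cmul_pow_pred_mul (a : ℤ) (p : ℤ[X]) (m : ℕ) :
    C (m:ℤ) * p^(m-1) * p = C (m:ℤ) * p^m := by
  cases m with
  | zero => simp
  | succ k => rw [Nat.add_sub_cancel, pow_succ]; ring

lemma Gp_deriv (c : ℤ) (m h : ℕ) :
    (1 + C c * X) * (1 - X) * derivative (Gp c m h)
      = (C c * C (m:ℤ) * (1 - X) - C (h:ℤ) * (1 + C c * X)) * Gp c m h := by
  rw [Gp, derivative_mul, derivative_pow, derivative_pow]
  have d1 : derivative (1 + C c * X : ℤ[X]) = C c := by simp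
  have d2 : derivative (1 - X : ℤ[X]) = -1 := by simp
  rw [d1, d2]
  have hA := cmul_pow_pred_mul c (1 + C c * X) m
  have hB := cmul_pow_pred_mul c (1 - X) h
  linear_combination (C c * (1 - X)^h * (1-X)) * hA - ((1 + C c * X)^m * (1 + C c * X)) * hB

lemma kraw_rec (q h n : ℕ) (hh : h ≤ n) (j : ℕ) :
    ((j:ℤ)+2) * kraw q (j+2) h n + ((q:ℤ)-2)*((j:ℤ)+1)*kraw q (j+1) h n
      - ((q:ℤ)-1)*(j:ℤ)*kraw q j h n
    = (((q:ℤ)-1)*(n:ℤ) - (q:ℤ)*(h:ℤ)) * kraw q (j+1) h n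
      - ((q:ℤ)-1)*(n:ℤ)*kraw q j h n := by
  have key := Gp_deriv ((q:ℤ)-1) (n-h) h
  have h1 : ((1:ℤ[X]) + C ((q:ℤ)-1) * X) * (1 - X)
      = 1 + C ((q:ℤ)-2) * X - C ((q:ℤ)-1) * X^2 := by
    simp only [C_sub, C_1, C_eq_natCast, map_ofNat]
    push_cast
    ring
  have h2 : C ((q:ℤ)-1) * C (((n-h:ℕ)):ℤ) * (1 - X) - C ((h:ℕ):ℤ) * (1 + C ((q:ℤ)-1) * X)
      = C (((q:ℤ)-1)*(n:ℤ) - (q:ℤ)*(h:ℤ)) - C (((q:ℤ)-1)*(n:ℤ)) * X := by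
    rw [Nat.cast_sub hh]
    simp only [C_sub, C_mul, C_1, C_eq_natCast]
    push_cast
    ring
  rw [h1, h2] at key
  have hc := congrArg (fun p : ℤ[X] => p.coeff (j+1)) key
  simp only [sub_mul, add_mul, one_mul, coeff_add, coeff_sub, mul_assoc, coeff_C_mul,
    coeff_X_mul, coeff_X_pow_mul'] at hc
  set D := derivative (Gp ((q:ℤ)-1) (n-h) h) with hD
  have cD : ∀ k, D.coeff k = (k+1 : ℤ) * kraw q (k+1) h n := by
    intro k
    rw [hD, coeff_derivative, Gp_coeff]
    push_cast
    ring
  have hX2 : (if 2 ≤ j + 1 then D.coeff (j+1-2) else 0) = (j:ℤ) * kraw q j h n := by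
    cases j with
    | zero => simp
    | succ k =>
      rw [if_pos (by omega)]
      have : k + 1 + 1 - 2 = k := by omega
      rw [this, cD k]
      push_cast
      ring
  rw [hX2, cD, cD, Gp_coeff, Gp_coeff] at hc
  push_cast at hc ⊢
  linarith [hc]

lemma kraw_zero (q h n : ℕ) : kraw q 0 h n = 1 := by
  simp [kraw]

lemma kraw_one (q h n : ℕ) (hh : h ≤ n) : kraw q 1 h n = ((q:ℤ)-1)*(n:ℤ) - (q:ℤ)*(h:ℤ) := by
  rw [kraw]
  rw [Finset.sum_range_succ, Finset.sum_range_succ, Finset.sum_range_zero]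
  simp [Nat.choose_one_right, Nat.cast_sub hh]
  ring

/-- Hamming weight. -/
def wt {q n : ℕ} [NeZero q] (α : Fin n → Fin q) : ℕ :=
  (Finset.univ.filter (fun j => α j ≠ 0)).card

variable {q n : ℕ} [NeZero q]

lemma filter_update (β : Fin n → Fin q) (j : Fin n) (v : Fin q) :
    Finset.univ.filter (fun k => Function.update β j v k ≠ 0)
      = if v ≠ 0 then insert j ((Finset.univ.filter (fun k => β k ≠ 0)).erase j)
        else (Finset.univ.filter (fun k => β k ≠ 0)).erase j := by
  ext k
  by_cases hk : k = j
  · subst hk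
    simp [Function.update_self]
    split_ifs with hv <;> simp [hv]
  · simp [Function.update_of_ne hk, hk]
    split_ifs with hv <;> simp [hk, Ne.symm hk]

lemma wt_update_zero (β : Fin n → Fin q) (j : Fin n) (hβ : β j ≠ 0) :
    wt (Function.update β j 0) + 1 = wt β := by
  rw [wt, filter_update]
  simp only [ne_eq, not_true_eq_false, if_false, not_not]
  rw [wt]
  exact Finset.card_erase_add_one (by simp [hβ])

lemma wt_update_ne (β : Fin n → Fin q) (j : Fin n) (v : Fin q) (hβ : β j ≠ 0) (hv : v ≠ 0) :
    wt (Function.update β j v) = wt β := by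
  rw [wt, filter_update, if_pos hv, Finset.insert_erase (by simp [hβ]), wt]

lemma wt_update_new (β : Fin n → Fin q) (j : Fin n) (v : Fin q) (hβ : β j = 0) (hv : v ≠ 0) :
    wt (Function.update β j v) = wt β + 1 := by
  rw [wt, filter_update, if_pos hv, Finset.erase_eq_of_notMem (by simp [hβ]), wt,
    Finset.card_insert_of_notMem (by simp [hβ])]

lemma cj_zero (β : Fin n → Fin q) (j : Fin n) (i : ℕ) (hβ : β j = 0) :
    (Finset.univ.filter (fun v => v ≠ β j ∧ wt (Function.update β j v) = i)).card
      = if wt β + 1 = i then q - 1 else 0 := by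
  by_cases hi : wt β + 1 = i
  · rw [if_pos hi]
    have he : Finset.univ.filter (fun v => v ≠ β j ∧ wt (Function.update β j v) = i)
        = Finset.univ.filter (fun v : Fin q => v ≠ 0) := by
      apply Finset.filter_congr
      intro v _
      constructor
      · rintro ⟨hv, -⟩; rwa [hβ] at hv
      · intro hv
        refine ⟨by rwa [hβ], ?_⟩
        rw [wt_update_new β j v hβ hv, hi]
    rw [he, Finset.filter_ne', Finset.card_erase_of_mem (Finset.mem_univ _),
      Finset.card_univ, Fintype.card_fin]
  · rw [if_neg hi, Finset.card_eq_zero, Finset.filter_eq_empty_iff]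
    rintro v - ⟨hv, hw⟩
    rw [hβ] at hv
    rw [wt_update_new β j v hβ hv] at hw
    exact hi hw

lemma cj_nonzero (β : Fin n → Fin q) (j : Fin n) (i : ℕ) (hβ : β j ≠ 0) :
    (Finset.univ.filter (fun v => v ≠ β j ∧ wt (Function.update β j v) = i)).card
      = (if wt β = i + 1 then 1 else 0) + (if wt β = i then q - 2 else 0) := by
  classical
  set S := Finset.univ.filter (fun v => v ≠ β j ∧ wt (Function.update β j v) = i) with hS
  have hsplit := Finset.card_filter_add_card_filter_not (s := S)
    (p := fun v : Fin q => v = 0)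
  have h0 : (S.filter (fun v : Fin q => v = 0)).card = if wt β = i + 1 then 1 else 0 := by
    by_cases hi : wt β = i + 1
    · rw [if_pos hi]
      have : S.filter (fun v : Fin q => v = 0) = {0} := by
        ext v
        simp only [hS, Finset.mem_filter, Finset.mem_univ, true_and, Finset.mem_singleton]
        constructor
        · rintro ⟨-, hv⟩; exact hv
        · rintro rfl
          refine ⟨⟨Ne.symm hβ, ?_⟩, rfl⟩
          have := wt_update_zero β j hβ
          omega
      rw [this, Finset.card_singleton]
    · rw [if_neg hi, Finset.card_eq_zero, Finset.filter_eq_empty_iff]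
      rintro v hv rfl
      rw [hS, Finset.mem_filter] at hv
      obtain ⟨-, -, hw⟩ := hv
      have := wt_update_zero β j hβ
      omega
  have h1 : (S.filter (fun v : Fin q => ¬ v = 0)).card = if wt β = i then q - 2 else 0 := by
    by_cases hi : wt β = i
    · rw [if_pos hi]
      have : S.filter (fun v : Fin q => ¬ v = 0) = (Finset.univ.erase (β j)).erase 0 := by
        ext v
        simp only [hS, Finset.mem_filter, Finset.mem_univ, true_and, Finset.mem_erase]
        constructor
        · rintro ⟨⟨hv1, -⟩, hv2⟩; exact ⟨hv2, hv1, trivial⟩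
        · rintro ⟨hv2, hv1, -⟩
          exact ⟨⟨hv1, by rw [wt_update_ne β j v hβ hv2, hi]⟩, hv2⟩
      rw [this, Finset.card_erase_of_mem (Finset.mem_erase.2 ⟨Ne.symm hβ, Finset.mem_univ _⟩),
        Finset.card_erase_of_mem (Finset.mem_univ _), Finset.card_univ, Fintype.card_fin]
      omega
    · rw [if_neg hi, Finset.card_eq_zero, Finset.filter_eq_empty_iff]
      rintro v hv hv0
      rw [hS, Finset.mem_filter] at hv
      obtain ⟨-, -, hw⟩ := hv
      rw [wt_update_ne β j v hβ hv0] at hw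
      exact hi hw
  omega

lemma dist_update (β : Fin n → Fin q) (j : Fin n) (v : Fin q) (hv : v ≠ β j) :
    hammingDist (Function.update β j v) β = 1 := by
  rw [hammingDist]
  convert Finset.card_singleton j
  ext k
  by_cases hk : k = j
  · subst hk; simp [Function.update_self, hv]
  · simp [Function.update_of_ne hk, hk]

lemma card_nbrs (β : Fin n → Fin q) (i : ℕ) :
    (Finset.univ.filter (fun α => wt α = i ∧ hammingDist α β = 1)).card
      = (if wt β + 1 = i then (n - wt β) * (q - 1) else 0)
        + (if wt β = i then wt β * (q - 2) else 0)
        + (if wt β = i + 1 then wt β else 0) := by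
  classical
  set s : Finset (Fin n × Fin q) :=
    Finset.univ.filter (fun p => p.2 ≠ β p.1 ∧ wt (Function.update β p.1 p.2) = i) with hs
  have hcard : (Finset.univ.filter (fun α => wt α = i ∧ hammingDist α β = 1)).card = s.card := by
    refine (Finset.card_bij (fun p _ => Function.update β p.1 p.2) ?_ ?_ ?_).symm
    · rintro ⟨j, v⟩ hp
      rw [hs, Finset.mem_filter] at hp
      obtain ⟨-, hv, hw⟩ := hp
      exact Finset.mem_filter.2 ⟨Finset.mem_univ _, hw, dist_update β j v hv⟩
    · rintro ⟨j, v⟩ hp ⟨j', v'⟩ hp' heq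
      rw [hs, Finset.mem_filter] at hp hp'
      obtain ⟨-, hv, -⟩ := hp
      obtain ⟨-, hv', -⟩ := hp'
      dsimp only at heq
      by_cases hj : j = j'
      · subst hj
        have := congrFun heq j
        rw [Function.update_self, Function.update_self] at this
        exact Prod.ext rfl this
      · exfalso
        have := congrFun heq j
        rw [Function.update_self, Function.update_of_ne hj] at this
        exact hv this
    · intro α hα
      rw [Finset.mem_filter] at hα
      obtain ⟨-, hw, hdist⟩ := hα
      obtain ⟨j, hj⟩ := Finset.card_eq_one.1 hdist
      have hj1 : α j ≠ β j := by
        have : j ∈ Finset.univ.filter (fun k => α k ≠ β k) := hj ▸ Finset.mem_singleton_self j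
        exact (Finset.mem_filter.1 this).2
      have hαeq : Function.update β j (α j) = α := by
        funext k
        by_cases hk : k = j
        · subst hk; rw [Function.update_self]
        · rw [Function.update_of_ne hk]
          by_contra hne
          have : k ∈ Finset.univ.filter (fun k => α k ≠ β k) :=
            Finset.mem_filter.2 ⟨Finset.mem_univ _, fun h => hne h.symm⟩
          rw [hj, Finset.mem_singleton] at this
          exact hk this
      refine ⟨(j, α j), ?_, hαeq⟩
      rw [hs, Finset.mem_filter]
      exact ⟨Finset.mem_univ _, hj1, by rw [hαeq]; exact hw⟩
  rw [hcard]
  rw [Finset.card_eq_sum_card_fiberwise (f := Prod.fst) (t := Finset.univ)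
    (fun p _ => Finset.mem_univ _)]
  have hfib : ∀ j : Fin n, (s.filter (fun p => p.1 = j)).card
      = (Finset.univ.filter (fun v => v ≠ β j ∧ wt (Function.update β j v) = i)).card := by
    intro j
    refine Finset.card_bij (fun p _ => p.2) ?_ ?_ ?_
    · rintro ⟨j', v⟩ hp
      rw [Finset.mem_filter, hs, Finset.mem_filter] at hp
      obtain ⟨⟨-, hv, hw⟩, hj⟩ := hp
      cases hj
      exact Finset.mem_filter.2 ⟨Finset.mem_univ _, hv, hw⟩
    · rintro ⟨j1, v1⟩ hp1 ⟨j2, v2⟩ hp2 heq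
      rw [Finset.mem_filter] at hp1 hp2
      cases hp1.2; cases hp2.2
      exact Prod.ext rfl heq
    · intro v hv
      rw [Finset.mem_filter] at hv
      exact ⟨(j, v), Finset.mem_filter.2 ⟨Finset.mem_filter.2 ⟨Finset.mem_univ _, hv.2⟩, rfl⟩, rfl⟩
  simp_rw [hfib]
  have hsplit := Finset.card_filter_add_card_filter_not
    (s := (Finset.univ : Finset (Fin n))) (p := fun j => β j ≠ 0)
  rw [← Finset.sum_filter_add_sum_filter_not Finset.univ (fun j => β j ≠ 0)]
  have e1 : ∑ j ∈ Finset.univ.filter (fun j => β j ≠ 0),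
      (Finset.univ.filter (fun v => v ≠ β j ∧ wt (Function.update β j v) = i)).card
      = wt β * ((if wt β = i + 1 then 1 else 0) + (if wt β = i then q - 2 else 0)) := by
    rw [Finset.sum_congr rfl (fun j hj => cj_nonzero β j i (Finset.mem_filter.1 hj).2),
      Finset.sum_const, wt, smul_eq_mul]
  have e2 : ∑ j ∈ Finset.univ.filter (fun j => ¬ β j ≠ 0),
      (Finset.univ.filter (fun v => v ≠ β j ∧ wt (Function.update β j v) = i)).card
      = (n - wt β) * (if wt β + 1 = i then q - 1 else 0) := by
    rw [Finset.sum_congr rfl (fun j hj => cj_zero β j i (not_not.1 (Finset.mem_filter.1 hj).2)),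
      Finset.sum_const, smul_eq_mul]
    congr 1
    rw [Finset.card_univ, Fintype.card_fin] at hsplit
    rw [show wt β = (Finset.univ.filter (fun j => β j ≠ 0)).card from rfl]
    simp only [ne_eq, not_not] at hsplit ⊢
    omega
  rw [e1, e2]
  split_ifs with h1 h2 h3 h4 h5 h6 h7 <;> ring_nf <;> omega

lemma swap_sum (f : (Fin n → Fin q) → ℂ) (i : ℕ) :
    ∑ α ∈ Finset.univ.filter (fun α => wt α = i),
      ∑ β ∈ Finset.univ.filter (fun β => hammingDist α β = 1), f β
    = ∑ β ∈ (Finset.univ : Finset (Fin n → Fin q)),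
        ((Finset.univ.filter (fun α => wt α = i ∧ hammingDist α β = 1)).card : ℂ) * f β := by
  rw [Finset.sum_filter]
  have step1 : ∀ α : Fin n → Fin q,
      (if wt α = i then ∑ β ∈ Finset.univ.filter (fun β => hammingDist α β = 1), f β else 0)
      = ∑ β ∈ (Finset.univ : Finset (Fin n → Fin q)),
          (if wt α = i ∧ hammingDist α β = 1 then f β else 0) := by
    intro α
    by_cases h : wt α = i
    · rw [if_pos h, Finset.sum_filter]
      exact Finset.sum_congr rfl fun β _ => by simp [h]
    · rw [if_neg h]
      exact (Finset.sum_eq_zero fun β _ => by simp [h]).symm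
  simp_rw [step1]
  rw [Finset.sum_comm]
  refine Finset.sum_congr rfl fun β _ => ?_
  rw [← Finset.sum_filter, Finset.sum_const, nsmul_eq_mul]

lemma sphere_sum (hq : 2 ≤ q) (f : (Fin n → Fin q) → ℂ) (j : ℕ) (hj : j < n) :
    ∑ α ∈ Finset.univ.filter (fun α => wt α = j+1),
      ∑ β ∈ Finset.univ.filter (fun β => hammingDist α β = 1), f β
    = ((q:ℂ)-1)*((n:ℂ)-(j:ℂ)) * (∑ β ∈ Finset.univ.filter (fun β => wt β = j), f β)
      + ((q:ℂ)-2)*((j:ℂ)+1) * (∑ β ∈ Finset.univ.filter (fun β => wt β = j+1), f β)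
      + ((j:ℂ)+2) * (∑ β ∈ Finset.univ.filter (fun β => wt β = j+2), f β) := by
  rw [swap_sum]
  have hcast : ∀ β : Fin n → Fin q,
      ((Finset.univ.filter (fun α => wt α = j+1 ∧ hammingDist α β = 1)).card : ℂ)
      = (if wt β = j then ((q:ℂ)-1)*((n:ℂ)-(j:ℂ)) else 0)
        + (if wt β = j+1 then ((q:ℂ)-2)*((j:ℂ)+1) else 0)
        + (if wt β = j+2 then ((j:ℂ)+2) else 0) := by
    intro β
    rw [card_nbrs β (j+1)]
    have e1 : (wt β + 1 = j + 1) ↔ wt β = j := by omega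
    have e3 : (wt β = j + 1 + 1) ↔ wt β = j + 2 := by omega
    rw [if_congr e1 rfl rfl, if_congr e3 rfl rfl]
    by_cases h1 : wt β = j
    · have h2 : ¬ wt β = j + 1 := by omega
      have h3 : ¬ wt β = j + 2 := by omega
      rw [if_pos h1, if_neg h2, if_neg h3, if_pos h1, if_neg h2, if_neg h3, h1]
      push_cast [Nat.cast_sub hj.le, Nat.cast_sub (show 1 ≤ q by omega)]
      ring
    · by_cases h2 : wt β = j + 1
      · have h3 : ¬ wt β = j + 2 := by omega
        rw [if_neg h1, if_pos h2, if_neg h3, if_neg h1, if_pos h2, if_neg h3, h2]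
        push_cast [Nat.cast_sub hq]
        ring
      · by_cases h3 : wt β = j + 2
        · rw [if_neg h1, if_neg h2, if_pos h3, if_neg h1, if_neg h2, if_pos h3, h3]
          push_cast
          ring
        · rw [if_neg h1, if_neg h2, if_neg h3, if_neg h1, if_neg h2, if_neg h3]
          norm_num
  have t : ∀ (w : ℕ) (c : ℂ),
      (∑ β ∈ (Finset.univ : Finset (Fin n → Fin q)), (if wt β = w then c else 0) * f β)
      = c * ∑ β ∈ Finset.univ.filter (fun β => wt β = w), f β := by
    intro w c
    rw [Finset.mul_sum, Finset.sum_filter]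
    exact Finset.sum_congr rfl fun β _ => by split_ifs <;> simp
  simp_rw [hcast, add_mul]
  rw [Finset.sum_add_distrib, Finset.sum_add_distrib, t j, t (j+1), t (j+2)]
  ring

lemma wt_eq_zero_iff (α : Fin n → Fin q) : wt α = 0 ↔ α = fun _ => 0 := by
  rw [wt, Finset.card_eq_zero, Finset.filter_eq_empty_iff]
  constructor
  · intro h
    funext j
    have := h (Finset.mem_univ j)
    simpa using this
  · intro h j _
    simp [h]

lemma dist_zero' (β : Fin n → Fin q) : hammingDist (fun _ => 0) β = wt β := by
  rw [hammingDist, wt]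
  congr 1
  ext k
  simp [eq_comm]

noncomputable def Ssum {q n : ℕ} [NeZero q] (f : (Fin n → Fin q) → ℂ) (k : ℕ) : ℂ :=
  ∑ β ∈ Finset.univ.filter (fun β => wt β = k), f β

lemma Ssum_zero (f : (Fin n → Fin q) → ℂ) : Ssum f 0 = f (fun _ => 0) := by
  rw [Ssum]
  have hfilter0 : Finset.univ.filter (fun α : Fin n → Fin q => wt α = 0)
      = {fun _ => 0} := by
    ext α
    simp [wt_eq_zero_iff]
  rw [hfilter0, Finset.sum_singleton]

/-- If P_d^{(q)}(h;n) ≠ 0 and d ≤ h, then the value of a λ-eigenfunction at the zero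
vertex is (Σ_{wt(α)=d} f(α)) / P_d^{(q)}(h;n). -/
theorem stmt4 (q n h d : ℕ) [NeZero q] (hq : 2 ≤ q) (hn : 1 ≤ n) (hh : h ≤ n)
    (hd : d ≤ h) (hP : kraw q d h n ≠ 0)
    (f : (Fin n → Fin q) → ℂ)
    (hf : ∀ α, ∑ β ∈ Finset.univ.filter (fun β => hammingDist α β = 1), f β
            = (((q:ℂ)-1)*n - q*h) * f α) :
    f (fun _ => 0) =
      (∑ α ∈ Finset.univ.filter (fun α => wt α = d), f α) / (kraw q d h n : ℂ) := by
  classical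
  have hS1 : Ssum f 1 = (((q:ℂ)-1)*n - q*h) * f (fun _ => 0) := by
    rw [← hf (fun _ => 0), Ssum]
    congr 1
    ext β
    simp [dist_zero']
  have hrec : ∀ j : ℕ, j < n →
      ((j:ℂ)+2) * Ssum f (j+2) = (((q:ℂ)-1)*n - q*h) * Ssum f (j+1)
        - ((q:ℂ)-2)*((j:ℂ)+1) * Ssum f (j+1)
        - ((q:ℂ)-1)*((n:ℂ)-(j:ℂ)) * Ssum f j := by
    intro j hj
    have h1 := sphere_sum hq f j hj
    have h2 : ∑ α ∈ Finset.univ.filter (fun α => wt α = j+1),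
        ∑ β ∈ Finset.univ.filter (fun β => hammingDist α β = 1), f β
        = (((q:ℂ)-1)*n - q*h)
          * ∑ β ∈ Finset.univ.filter (fun β : Fin n → Fin q => wt β = j+1), f β := by
      rw [Finset.sum_congr rfl (fun α _ => hf α), ← Finset.mul_sum]
    rw [h2] at h1
    rw [Ssum, Ssum, Ssum]
    linear_combination -h1
  have main : ∀ k, k ≤ d → Ssum f k = (kraw q k h n : ℂ) * f (fun _ => 0) := by
    intro k
    induction k using Nat.strong_induction_on with
    | _ k ih =>
      match k with
      | 0 => intro _; rw [kraw_zero, Ssum_zero]; push_cast; ring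
      | 1 =>
        intro _
        rw [kraw_one q h n hh, hS1]
        push_cast
        ring
      | (j+2) =>
        intro hk
        have hjn : j < n := by omega
        have e := hrec j hjn
        rw [ih j (by omega) (by omega), ih (j+1) (by omega) (by omega)] at e
        have krec := kraw_rec q h n hh j
        have krecC : ((j:ℂ)+2) * (kraw q (j+2) h n : ℂ)
            + ((q:ℂ)-2)*((j:ℂ)+1)*(kraw q (j+1) h n : ℂ)
            - ((q:ℂ)-1)*(j:ℂ)*(kraw q j h n : ℂ)
            = (((q:ℂ)-1)*(n:ℂ) - (q:ℂ)*(h:ℂ)) * (kraw q (j+1) h n : ℂ)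
              - ((q:ℂ)-1)*(n:ℂ)*(kraw q j h n : ℂ) := by
          exact_mod_cast congrArg (fun z : ℤ => (z : ℂ)) krec
        have hne : ((j:ℂ)+2) ≠ 0 := by
          intro hc
          have h22 : ((j:ℂ)+2) = ((j+2 : ℕ) : ℂ) := by push_cast; ring
          rw [h22] at hc
          exact_mod_cast hc
        apply mul_left_cancel₀ hne
        rw [e]
        linear_combination (-f (fun _ => 0)) * krecC
  have hSd := main d le_rfl
  have hKne : ((kraw q d h n : ℤ) : ℂ) ≠ 0 := by exact_mod_cast hP
  rw [show (∑ α ∈ Finset.univ.filter (fun α => wt α = d), f α) = Ssum f d from rfl, hSd]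
  field_simp
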